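/- For every infinite cardinal κ, the square P_κ × P_κ satisfies the partition relation P_κ × P_κ → (P_κ)¹₂: whenever P_κ × P_κ is partitioned into two pieces, one of the pieces contains a homeomorphic copy of P_κ. -/

import Mathlib

/-- The carrier of the space `P κ`: the ordinal `κ + 1`, realized as `WithTop` of a type
of order type `κ.ord`, with `⊤` playing the role of the point `κ`. -/
abbrev PCarrier (κ : Cardinal) := WithTop κ.ord.ToType

/-- The topology on `P κ`: every point below `κ` is isolated, and a set containing the
top point `κ` is open iff it contains a final segment `(ξ, κ]`. -/
instance PTop (κ : Cardinal) : TopologicalSpace (PCarrier κ) where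
  IsOpen U := (⊤ : PCarrier κ) ∈ U →
    (IsEmpty κ.ord.ToType ∨ ∃ ξ : κ.ord.ToType, ∀ x : κ.ord.ToType, ξ < x → ((x : PCarrier κ) ∈ U))
  isOpen_univ := by
    intro _
    rcases isEmpty_or_nonempty κ.ord.ToType with h | h
    · exact Or.inl h
    · exact Or.inr ⟨Classical.arbitrary _, fun x _ => trivial⟩
  isOpen_inter := by
    intro U V hU hV hUV
    rcases hU hUV.1 with h1 | ⟨ξ₁, h1⟩
    · exact Or.inl h1
    rcases hV hUV.2 with h2 | ⟨ξ₂, h2⟩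
    · exact Or.inl h2
    exact Or.inr ⟨max ξ₁ ξ₂, fun x hx =>
      ⟨h1 x (lt_of_le_of_lt (le_max_left _ _) hx), h2 x (lt_of_le_of_lt (le_max_right _ _) hx)⟩⟩
  isOpen_sUnion := by
    intro S hS hmem
    rcases hmem with ⟨U, hUS, hU⟩
    rcases hS U hUS hU with h | ⟨ξ, h⟩
    · exact Or.inl h
    · exact Or.inr ⟨ξ, fun x hx => ⟨U, hUS, h x hx⟩⟩

/-- `HasCopy Y P` : the set `P` (in an ambient space `X`) contains a subspace homeomorphic
to `Y`. -/
def HasCopy (Y : Type*) [TopologicalSpace Y] {X : Type*} [TopologicalSpace X]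
    (P : Set X) : Prop :=
  ∃ s : Set X, s ⊆ P ∧ Nonempty (Y ≃ₜ s)

open Cardinal Set

section Aux
variable {κ : Cardinal}

private lemma mk_toType' (κ : Cardinal) : #κ.ord.ToType = κ := by
  rw [Cardinal.mk_toType, Cardinal.card_ord]

private lemma neT (hκ : ℵ₀ ≤ κ) : Nonempty κ.ord.ToType :=
  Cardinal.mk_ne_zero_iff.1 (by rw [mk_toType']; exact (lt_of_lt_of_le aleph0_pos hκ).ne')

private lemma isOpen_iff {U : Set (PCarrier κ)} :
    IsOpen U ↔ ((⊤ : PCarrier κ) ∈ U →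
      (IsEmpty κ.ord.ToType ∨ ∃ ξ : κ.ord.ToType, ∀ x : κ.ord.ToType, ξ < x →
        ((x : PCarrier κ) ∈ U))) := Iff.rfl

private lemma monoInto {A : Set κ.ord.ToType} (hA : #A = κ) :
    ∃ e : κ.ord.ToType → κ.ord.ToType, StrictMono e ∧ ∀ α, e α ∈ A := by
  letI i1 : IsWellOrder κ.ord.ToType ((· < ·) : κ.ord.ToType → κ.ord.ToType → Prop) :=
    isWellOrder_lt
  letI i2 : IsWellOrder A ((· < ·) : A → A → Prop) := isWellOrder_lt
  have h1 : Ordinal.type ((· < ·) : κ.ord.ToType → κ.ord.ToType → Prop) ≤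
      Ordinal.type ((· < ·) : A → A → Prop) := by
    rw [Ordinal.type_toType]
    refine Cardinal.ord_le.2 ?_
    rw [Ordinal.card_type, hA]
  obtain ⟨f⟩ := Ordinal.type_le_iff.1 h1
  refine ⟨fun α => (f α).1, fun a b h => ?_, fun α => (f α).2⟩
  exact Subtype.coe_lt_coe.2 (f.map_rel_iff.2 h)

private lemma unboundedT (hκ : ℵ₀ ≤ κ) {D : Set κ.ord.ToType} (hD : #D = κ)
    (γ : κ.ord.ToType) : ∃ y ∈ D, γ < y := by
  by_contra h
  push_neg at h
  obtain ⟨e, he, heD⟩ := monoInto hD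
  have := Cardinal.noMaxOrder hκ
  obtain ⟨δ, hδ⟩ := exists_gt γ
  exact absurd (h _ (heD δ)) (not_le.2 (lt_of_lt_of_le hδ he.le_apply))

private lemma compl_big (hκ : ℵ₀ ≤ κ) {s : Set κ.ord.ToType} (hs : #s ≠ κ) :
    #(sᶜ : Set κ.ord.ToType) = κ := by
  have h1 : #s < κ := lt_of_le_of_ne ((Cardinal.mk_set_le s).trans_eq (mk_toType' κ)) hs
  have h2 : #(sᶜ : Set κ.ord.ToType) ≤ κ := (Cardinal.mk_set_le _).trans_eq (mk_toType' κ)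
  rcases h2.lt_or_eq with h | h
  · exfalso
    have h3 := Cardinal.mk_sum_compl s
    rw [mk_toType'] at h3
    exact (Cardinal.add_lt_of_lt hκ h1 h).ne h3
  · exact h

private lemma continuous_of_tail {Z : Type*} [TopologicalSpace Z] {g : PCarrier κ → Z}
    (h : ∀ U : Set Z, IsOpen U → g ⊤ ∈ U → ∃ ξ : κ.ord.ToType, ∀ α : κ.ord.ToType, ξ < α → g ↑α ∈ U) :
    Continuous g := by
  rw [continuous_def]
  intro U hU
  rw [isOpen_iff]
  intro hmem
  obtain ⟨ξ, hξ⟩ := h U hU hmem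
  exact Or.inr ⟨ξ, hξ⟩

private lemma copy_lemma (hκ : ℵ₀ ≤ κ) {e : κ.ord.ToType → κ.ord.ToType} (he : StrictMono e)
    (q : κ.ord.ToType → PCarrier κ) (q' : PCarrier κ)
    (hconv : ∀ U : Set (PCarrier κ), IsOpen U → q' ∈ U → ∃ ξ : κ.ord.ToType, ∀ α : κ.ord.ToType, ξ < α → q α ∈ U)
    (X : Set (PCarrier κ × PCarrier κ))
    (hX₁ : ((⊤ : PCarrier κ), q') ∈ X)
    (hX₂ : ∀ α, (((e α : κ.ord.ToType) : PCarrier κ), q α) ∈ X) :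
    HasCopy (PCarrier κ) X := by
  classical
  have hne : Nonempty κ.ord.ToType := neT hκ
  set F : PCarrier κ → PCarrier κ × PCarrier κ :=
    fun t => WithTop.recTopCoe ((⊤ : PCarrier κ), q')
      (fun α => (((e α : κ.ord.ToType) : PCarrier κ), q α)) t with hF
  have hF_top : F ⊤ = ((⊤ : PCarrier κ), q') := rfl
  have hF_coe : ∀ α : κ.ord.ToType, F ↑α = (((e α : κ.ord.ToType) : PCarrier κ), q α) :=
    fun _ => rfl
  have hFinj : Function.Injective F := by
    intro a b hab
    induction a using WithTop.recTopCoe with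
    | top =>
      induction b using WithTop.recTopCoe with
      | top => rfl
      | coe β =>
        exfalso
        have := congrArg Prod.fst hab
        rw [hF_top, hF_coe] at this
        exact (WithTop.coe_ne_top (a := e β)) this.symm
    | coe α =>
      induction b using WithTop.recTopCoe with
      | top =>
        exfalso
        have := congrArg Prod.fst hab
        rw [hF_top, hF_coe] at this
        exact (WithTop.coe_ne_top (a := e α)) this
      | coe β =>
        have := congrArg Prod.fst hab
        rw [hF_coe, hF_coe] at this
        exact congrArg _ (he.injective (WithTop.coe_injective this))
  have hFcont : Continuous F := by
    apply continuous_of_tail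
    intro U hU hmem
    rw [hF_top] at hmem
    obtain ⟨V₁, V₂, hV₁, hV₂, hm₁, hm₂, hsub⟩ := isOpen_prod_iff.1 hU _ _ hmem
    obtain ⟨ξ₁, hξ₁⟩ := (isOpen_iff.1 hV₁ hm₁).resolve_left (not_isEmpty_of_nonempty _)
    obtain ⟨ξ₂, hξ₂⟩ := hconv V₂ hV₂ hm₂
    refine ⟨max ξ₁ ξ₂, fun α hα => ?_⟩
    rw [hF_coe]
    refine hsub ⟨hξ₁ _ ?_, hξ₂ _ (lt_of_le_of_lt (le_max_right _ _) hα)⟩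
    exact lt_of_lt_of_le (lt_of_le_of_lt (le_max_left _ _) hα) he.le_apply
  let E : PCarrier κ ≃ Set.range F := Equiv.ofInjective F hFinj
  have hEcoe : ∀ t, (E t : PCarrier κ × PCarrier κ) = F t := fun t => rfl
  have hEcont : Continuous (⇑E) := Continuous.subtype_mk hFcont _
  have hopen : IsOpenMap (⇑E) := by
    intro U hU
    rw [isOpen_induced_iff]
    have hmemE : ∀ t, E t ∈ E '' U ↔ t ∈ U := fun t =>
      ⟨fun ⟨u, hu, h⟩ => E.injective h ▸ hu, fun h => ⟨t, h, rfl⟩⟩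
    by_cases htop : (⊤ : PCarrier κ) ∈ U
    · obtain ⟨ξ, hξ⟩ := (isOpen_iff.1 hU htop).resolve_left (not_isEmpty_of_nonempty _)
      refine ⟨((fun α : κ.ord.ToType => ((e α : κ.ord.ToType) : PCarrier κ)) ''
          {α | (α : PCarrier κ) ∈ U}) ×ˢ (univ : Set (PCarrier κ)) ∪
          {x : PCarrier κ | ((e ξ : κ.ord.ToType) : PCarrier κ) < x} ×ˢ
          (univ : Set (PCarrier κ)), ?_, ?_⟩
      · refine IsOpen.union (IsOpen.prod ?_ isOpen_univ) (IsOpen.prod ?_ isOpen_univ)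
        · rw [isOpen_iff]
          rintro ⟨α, _, hα⟩
          exact absurd hα (WithTop.coe_ne_top)
        · rw [isOpen_iff]
          exact fun _ => Or.inr ⟨e ξ, fun x hx => WithTop.coe_lt_coe.2 hx⟩
      · ext s
        obtain ⟨t, rfl⟩ := E.surjective s
        rw [mem_preimage, hEcoe, hmemE]
        induction t using WithTop.recTopCoe with
        | top =>
          simp only [hF_top]
          constructor
          · intro _; exact htop
          · intro _
            exact Or.inr ⟨WithTop.coe_lt_top _, mem_univ _⟩
        | coe α =>
          simp only [hF_coe]
          constructor
          · rintro (⟨⟨β, hβ, hβα⟩, -⟩ | ⟨hlt, -⟩)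
            · rwa [he.injective (WithTop.coe_injective hβα)] at hβ
            · exact hξ α (he.lt_iff_lt.1 (WithTop.coe_lt_coe.1 hlt))
          · intro hα
            exact Or.inl ⟨⟨α, hα, rfl⟩, mem_univ _⟩
    · refine ⟨((fun α : κ.ord.ToType => ((e α : κ.ord.ToType) : PCarrier κ)) ''
          {α | (α : PCarrier κ) ∈ U}) ×ˢ (univ : Set (PCarrier κ)), ?_, ?_⟩
      · refine IsOpen.prod ?_ isOpen_univ
        rw [isOpen_iff]
        rintro ⟨α, _, hα⟩
        exact absurd hα (WithTop.coe_ne_top)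
      · ext s
        obtain ⟨t, rfl⟩ := E.surjective s
        rw [mem_preimage, hEcoe, hmemE]
        induction t using WithTop.recTopCoe with
        | top =>
          simp only [hF_top]
          constructor
          · rintro ⟨⟨β, hβ, hβα⟩, -⟩
            exact absurd hβα WithTop.coe_ne_top
          · intro h; exact absurd h htop
        | coe α =>
          simp only [hF_coe]
          constructor
          · rintro ⟨⟨β, hβ, hβα⟩, -⟩
            rwa [he.injective (WithTop.coe_injective hβα)] at hβ
          · intro hα
            exact ⟨⟨α, hα, rfl⟩, mem_univ _⟩
  refine ⟨Set.range F, ?_, ⟨Equiv.toHomeomorphOfContinuousOpen E hEcont hopen⟩⟩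
  rintro p ⟨t, rfl⟩
  induction t using WithTop.recTopCoe with
  | top => exact hX₁
  | coe α => exact hX₂ α

private lemma hasCopy_swap {Y : Type*} [TopologicalSpace Y] {X : Set (PCarrier κ × PCarrier κ)}
    (h : HasCopy Y (Prod.swap ⁻¹' X)) : HasCopy Y X := by
  obtain ⟨s, hs, ⟨φ⟩⟩ := h
  refine ⟨Prod.swap '' s, ?_, ⟨φ.trans ?_⟩⟩
  · rintro p ⟨p', hp', rfl⟩
    exact hs hp'
  · exact Homeomorph.image (Homeomorph.prodComm (PCarrier κ) (PCarrier κ)) s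

end Aux

/-- Corollary 4.2: for every infinite cardinal `κ`, `P_κ × P_κ → (P_κ)¹₂`. -/
theorem Pkappa_square_arrow (κ : Cardinal) (hκ : Cardinal.aleph0 ≤ κ)
    (X₀ X₁ : Set (PCarrier κ × PCarrier κ)) (hpart : X₀ ∪ X₁ = Set.univ) :
    HasCopy (PCarrier κ) X₀ ∨ HasCopy (PCarrier κ) X₁ := by
  have hne : Nonempty κ.ord.ToType := neT hκ
  have key : ∀ Y₀ Y₁ : Set (PCarrier κ × PCarrier κ), Y₀ ∪ Y₁ = Set.univ →
      ((⊤ : PCarrier κ), (⊤ : PCarrier κ)) ∈ Y₀ →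
      HasCopy (PCarrier κ) Y₀ ∨ HasCopy (PCarrier κ) Y₁ := by
    intro Y₀ Y₁ hp hc
    have hmem : ∀ p, p ∈ Y₀ ∨ p ∈ Y₁ := fun p => by
      have : p ∈ Y₀ ∪ Y₁ := hp ▸ Set.mem_univ p
      exact this
    set A : Set κ.ord.ToType := {x | ((x : PCarrier κ), (⊤ : PCarrier κ)) ∈ Y₀} with hAdef
    by_cases hA : #A = κ
    · obtain ⟨e, he, heA⟩ := monoInto hA
      left
      exact copy_lemma hκ he (fun _ => (⊤ : PCarrier κ)) (⊤ : PCarrier κ)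
        (fun U _ hU => ⟨Classical.arbitrary _, fun _ _ => hU⟩) Y₀ hc (fun α => heA α)
    · have hAc : #(Aᶜ : Set κ.ord.ToType) = κ := compl_big hκ hA
      by_cases hcol : ∃ x ∈ (Aᶜ : Set κ.ord.ToType),
          #({y | ((x : PCarrier κ), (y : PCarrier κ)) ∈ Y₁} : Set κ.ord.ToType) = κ
      · right
        obtain ⟨x, hxB, hC⟩ := hcol
        obtain ⟨e, he, heC⟩ := monoInto hC
        apply hasCopy_swap
        refine copy_lemma hκ he (fun _ => (x : PCarrier κ)) (x : PCarrier κ)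
          (fun U _ hU => ⟨Classical.arbitrary _, fun _ _ => hU⟩) _ ?_ ?_
        · show ((x : PCarrier κ), (⊤ : PCarrier κ)) ∈ Y₁
          exact (hmem _).resolve_left hxB
        · intro α
          show ((x : PCarrier κ), ((e α : κ.ord.ToType) : PCarrier κ)) ∈ Y₁
          exact heC α
      · left
        push_neg at hcol
        obtain ⟨e, he, heB⟩ := monoInto hAc
        have hD : ∀ α : κ.ord.ToType,
            ∃ y : κ.ord.ToType,
              (((e α : κ.ord.ToType) : PCarrier κ), (y : PCarrier κ)) ∈ Y₀ ∧ e α < y := by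
          intro α
          have hC := hcol _ (heB α)
          have hDk : #({y | (((e α : κ.ord.ToType) : PCarrier κ), (y : PCarrier κ)) ∈ Y₀} :
              Set κ.ord.ToType) = κ := by
            have hcompl := compl_big hκ hC
            have hsub : ({y | ((((e α) : κ.ord.ToType) : PCarrier κ), (y : PCarrier κ)) ∈ Y₁}ᶜ :
                Set κ.ord.ToType) ⊆
                {y | (((e α : κ.ord.ToType) : PCarrier κ), (y : PCarrier κ)) ∈ Y₀} :=
              fun y hy => (hmem _).resolve_right hy
            refine le_antisymm ((Cardinal.mk_set_le _).trans_eq (mk_toType' κ)) ?_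
            calc κ = _ := hcompl.symm
              _ ≤ _ := Cardinal.mk_le_mk_of_subset hsub
          obtain ⟨y, hyD, hy⟩ := unboundedT hκ hDk (e α)
          exact ⟨y, hyD, hy⟩
        choose y hy₁ hy₂ using hD
        refine copy_lemma hκ he (fun α => ((y α : κ.ord.ToType) : PCarrier κ))
          (⊤ : PCarrier κ) ?_ Y₀ hc (fun α => hy₁ α)
        intro U hUo hU
        obtain ⟨ξ, hξ⟩ := (isOpen_iff.1 hUo hU).resolve_left (not_isEmpty_of_nonempty _)
        exact ⟨ξ, fun α hα => hξ _ (lt_trans (lt_of_lt_of_le hα he.le_apply) (hy₂ α))⟩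
  rcases (show ((⊤ : PCarrier κ), (⊤ : PCarrier κ)) ∈ X₀ ∪ X₁ from
    hpart ▸ Set.mem_univ _) with hc | hc
  · exact key X₀ X₁ hpart hc
  · exact (key X₁ X₀ (by rw [Set.union_comm]; exact hpart) hc).symm
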